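/- Let φ be a frame for H with frame bounds A and B such that for some I ⊂ ℕ the subfamily {φ_n : n ∈ I} is a Riesz basis for H with lower frame bound A'. Let ψ be the canonical dual of φ, m ∈ ℓ^∞ and λ ∈ ℂ. If (sup_{n∉I} |m_n − λ|) · (B − A')/A < (inf_{n∈I} |m_n − λ|) · A'/B, then λ lies in the resolvent set of M_{m,φ,ψ}. -/

import Mathlib

open scoped InnerProductSpace

private lemma finset_CS {ι : Type*} (s : Finset ι) (a b : ι → ℝ)
    (ha : ∀ i, 0 ≤ a i) (hb : ∀ i, 0 ≤ b i) :
    ∑ i ∈ s, a i * b i ≤ Real.sqrt (∑ i ∈ s, a i ^ 2) * Real.sqrt (∑ i ∈ s, b i ^ 2) := by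
  have h := Finset.sum_mul_sq_le_sq_mul_sq s a b
  have h0 : (0:ℝ) ≤ ∑ i ∈ s, a i * b i :=
    Finset.sum_nonneg fun i _ => mul_nonneg (ha i) (hb i)
  have := Real.sqrt_le_sqrt h
  rwa [Real.sqrt_sq h0, Real.sqrt_mul (Finset.sum_nonneg fun i _ => sq_nonneg (a i))] at this

private lemma tsum_CS {ι : Type*} (a b : ι → ℝ) (ha : ∀ i, 0 ≤ a i) (hb : ∀ i, 0 ≤ b i)
    (h1 : Summable fun i => a i ^ 2) (h2 : Summable fun i => b i ^ 2) :
    Summable (fun i => a i * b i) ∧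
      ∑' i, a i * b i ≤ Real.sqrt (∑' i, a i ^ 2) * Real.sqrt (∑' i, b i ^ 2) := by
  have hs : Summable fun i => a i * b i := by
    apply Summable.of_nonneg_of_le (fun i => mul_nonneg (ha i) (hb i)) (fun i => ?_) (h1.add h2)
    nlinarith [two_mul_le_add_sq (a i) (b i), mul_nonneg (ha i) (hb i)]
  refine ⟨hs, Summable.tsum_le_of_sum_le hs fun s => ?_⟩
  calc ∑ i ∈ s, a i * b i
      ≤ Real.sqrt (∑ i ∈ s, a i ^ 2) * Real.sqrt (∑ i ∈ s, b i ^ 2) := finset_CS s a b ha hb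
    _ ≤ Real.sqrt (∑' i, a i ^ 2) * Real.sqrt (∑' i, b i ^ 2) := by
        exact mul_le_mul (Real.sqrt_le_sqrt (Summable.sum_le_tsum s (fun i _ => sq_nonneg _) h1))
          (Real.sqrt_le_sqrt (Summable.sum_le_tsum s (fun i _ => sq_nonneg _) h2))
          (Real.sqrt_nonneg _) (Real.sqrt_nonneg _)

private lemma le_of_sq_le_sq' {x y : ℝ} (hy : 0 ≤ y) (h : x ^ 2 ≤ y ^ 2) (hx : 0 ≤ x) : x ≤ y := by
  nlinarith

private lemma synth_exists {H : Type*} [NormedAddCommGroup H] [InnerProductSpace ℂ H]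
    [CompleteSpace H] {ι : Type*} (φ : ι → H) (β : ℝ) (hβ : 0 ≤ β)
    (hb1 : ∀ v : H, Summable (fun n => ‖⟪φ n, v⟫_ℂ‖ ^ 2))
    (hb2 : ∀ v : H, ∑' n, ‖⟪φ n, v⟫_ℂ‖ ^ 2 ≤ β * ‖v‖ ^ 2)
    (c : ι → ℂ) (hc : Summable fun n => ‖c n‖ ^ 2) :
    ∃ w, HasSum (fun n => c n • φ n) w ∧
      ‖w‖ ≤ Real.sqrt β * Real.sqrt (∑' n, ‖c n‖ ^ 2) := by
  have key : ∀ t : Finset ι, ‖∑ n ∈ t, c n • φ n‖ ≤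
      Real.sqrt β * Real.sqrt (∑ n ∈ t, ‖c n‖ ^ 2) := by
    intro t
    set v := ∑ n ∈ t, c n • φ n with hv
    by_cases hv0 : v = 0
    · rw [hv0]
      simp only [norm_zero]
      positivity
    have h1 : ‖v‖ ^ 2 = ‖(⟪v, v⟫_ℂ)‖ := by
      rw [@inner_self_eq_norm_sq_to_K ℂ]
      simp [norm_pow]
    have h2 : (⟪v, v⟫_ℂ) = ∑ n ∈ t, c n * ⟪v, φ n⟫_ℂ := by
      rw [hv, inner_sum]
      exact Finset.sum_congr rfl fun n _ => inner_smul_right _ _ _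
    have h3 : ‖v‖ ^ 2 ≤ ∑ n ∈ t, ‖c n‖ * ‖⟪φ n, v⟫_ℂ‖ := by
      rw [h1, h2]
      refine (norm_sum_le _ _).trans ?_
      refine Finset.sum_le_sum fun n _ => ?_
      rw [norm_mul, norm_inner_symm]
    have h4 : ∑ n ∈ t, ‖c n‖ * ‖⟪φ n, v⟫_ℂ‖ ≤
        Real.sqrt (∑ n ∈ t, ‖c n‖ ^ 2) * Real.sqrt (∑ n ∈ t, ‖⟪φ n, v⟫_ℂ‖ ^ 2) :=
      finset_CS t _ _ (fun n => norm_nonneg _) (fun n => norm_nonneg _)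
    have h5 : ∑ n ∈ t, ‖⟪φ n, v⟫_ℂ‖ ^ 2 ≤ β * ‖v‖ ^ 2 :=
      (Summable.sum_le_tsum t (fun n _ => sq_nonneg _) (hb1 v)).trans (hb2 v)
    have h6 : Real.sqrt (∑ n ∈ t, ‖⟪φ n, v⟫_ℂ‖ ^ 2) ≤ Real.sqrt β * ‖v‖ := by
      refine (Real.sqrt_le_sqrt h5).trans ?_
      rw [Real.sqrt_mul hβ, Real.sqrt_sq (norm_nonneg _)]
    have hvpos : 0 < ‖v‖ := norm_pos_iff.mpr hv0
    have : ‖v‖ ^ 2 ≤ Real.sqrt (∑ n ∈ t, ‖c n‖ ^ 2) * (Real.sqrt β * ‖v‖) := by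
      refine h3.trans (h4.trans ?_)
      exact mul_le_mul_of_nonneg_left h6 (Real.sqrt_nonneg _)
    nlinarith [Real.sqrt_nonneg (∑ n ∈ t, ‖c n‖ ^ 2), Real.sqrt_nonneg β]
  have hsum : Summable fun n => c n • φ n := by
    rw [summable_iff_vanishing]
    intro e he
    obtain ⟨ε, hε, hball⟩ := Metric.mem_nhds_iff.mp he
    set δ : ℝ := (ε / (Real.sqrt β + 1)) ^ 2 with hδ
    have hβ1 : (0:ℝ) < Real.sqrt β + 1 := by positivity
    have hδpos : 0 < δ := by positivity
    obtain ⟨s, hs⟩ := (summable_iff_vanishing.mp hc) (Set.Iio δ) (Iio_mem_nhds hδpos)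
    refine ⟨s, fun t ht => ?_⟩
    apply hball
    rw [Metric.mem_ball, dist_zero_right]
    have h1 : ∑ n ∈ t, ‖c n‖ ^ 2 < δ := hs t ht
    have h2 : Real.sqrt (∑ n ∈ t, ‖c n‖ ^ 2) < Real.sqrt δ :=
      (Real.sqrt_lt_sqrt (Finset.sum_nonneg fun n _ => sq_nonneg _)) h1
    have h3 : Real.sqrt δ = ε / (Real.sqrt β + 1) := Real.sqrt_sq (by positivity)
    calc ‖∑ n ∈ t, c n • φ n‖ ≤ Real.sqrt β * Real.sqrt (∑ n ∈ t, ‖c n‖ ^ 2) := key t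
      _ ≤ Real.sqrt β * Real.sqrt δ := by
          exact mul_le_mul_of_nonneg_left h2.le (Real.sqrt_nonneg _)
      _ < (Real.sqrt β + 1) * Real.sqrt δ := by
          have : 0 < Real.sqrt δ := by rw [h3]; positivity
          nlinarith
      _ = ε := by rw [h3]; field_simp
  refine ⟨∑' n, c n • φ n, hsum.hasSum, ?_⟩
  refine le_of_tendsto hsum.hasSum.norm (Filter.Eventually.of_forall fun t => ?_)
  refine (key t).trans (mul_le_mul_of_nonneg_left ?_ (Real.sqrt_nonneg _))
  exact Real.sqrt_le_sqrt (Summable.sum_le_tsum t (fun n _ => sq_nonneg _) hc)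

/-- `φ` is a Riesz basis with bounds `A ≤ B`: it is complete and the ℓ²-synthesis
inequalities hold. -/
def IsRieszBasisWith {H : Type*} [NormedAddCommGroup H] [InnerProductSpace ℂ H]
    {ι : Type*} (φ : ι → H) (A B : ℝ) : Prop :=
  (Submodule.span ℂ (Set.range φ)).topologicalClosure = ⊤ ∧
  ∀ c : ι → ℂ, Summable (fun n => ‖c n‖ ^ 2) →
    ∃ s : H, HasSum (fun n => c n • φ n) s ∧
      A * ∑' n, ‖c n‖ ^ 2 ≤ ‖s‖ ^ 2 ∧ ‖s‖ ^ 2 ≤ B * ∑' n, ‖c n‖ ^ 2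

private lemma riesz_lower {H : Type*} [NormedAddCommGroup H] [InnerProductSpace ℂ H]
    {ι : Type*} (e : ι → H) (A' B1 : ℝ) (hA' : 0 < A')
    (h : IsRieszBasisWith e A' B1) (f : H)
    (hs : Summable fun n => ‖⟪e n, f⟫_ℂ‖ ^ 2) :
    A' * ‖f‖ ^ 2 ≤ ∑' n, ‖⟪e n, f⟫_ℂ‖ ^ 2 := by
  set t : ℝ := ∑' n, ‖⟪e n, f⟫_ℂ‖ ^ 2 with ht
  have ht0 : 0 ≤ t := tsum_nonneg fun n => sq_nonneg _
  set K : ℝ := Real.sqrt (t / A') with hK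
  have claim : ∀ x ∈ Submodule.span ℂ (Set.range e), ‖(⟪x, f⟫_ℂ)‖ ≤ K * ‖x‖ := by
    intro x hx
    rw [Finsupp.mem_span_range_iff_exists_finsupp] at hx
    obtain ⟨c, hcx⟩ := hx
    have hzero : ∀ n ∉ c.support, ‖(c n : ℂ)‖ ^ 2 = 0 := fun n hn => by
      simp [Finsupp.notMem_support_iff.mp hn]
    have hcs : Summable fun n => ‖(c n : ℂ)‖ ^ 2 :=
      summable_of_ne_finset_zero (s := c.support) hzero
    obtain ⟨s, hss, hlow, _⟩ := h.2 c hcs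
    have hx' : HasSum (fun n => c n • e n) x := by
      rw [← hcx, Finsupp.sum]
      exact hasSum_sum_of_ne_finset_zero (s := c.support)
        (fun n hn => by simp [Finsupp.notMem_support_iff.mp hn])
    have hsx : s = x := hss.unique hx'
    have htsum : ∑' n, ‖(c n : ℂ)‖ ^ 2 = ∑ n ∈ c.support, ‖(c n : ℂ)‖ ^ 2 :=
      tsum_eq_sum hzero
    have hxin : ⟪x, f⟫_ℂ = ∑ n ∈ c.support, (starRingEnd ℂ) (c n) * ⟪e n, f⟫_ℂ := by
      rw [← hcx, Finsupp.sum, sum_inner]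
      exact Finset.sum_congr rfl fun n _ => inner_smul_left _ _ _
    have hb1 : ‖(⟪x, f⟫_ℂ)‖ ≤ ∑ n ∈ c.support, ‖(c n : ℂ)‖ * ‖⟪e n, f⟫_ℂ‖ := by
      rw [hxin]
      refine (norm_sum_le _ _).trans (Finset.sum_le_sum fun n _ => ?_)
      rw [norm_mul, RCLike.norm_conj]
    have hb2 := finset_CS c.support (fun n => ‖(c n : ℂ)‖) (fun n => ‖⟪e n, f⟫_ℂ‖)
      (fun n => norm_nonneg _) (fun n => norm_nonneg _)
    have hc2 : ∑ n ∈ c.support, ‖(c n : ℂ)‖ ^ 2 ≤ ‖x‖ ^ 2 / A' := by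
      rw [← htsum]
      rw [hsx] at hlow
      rw [le_div_iff₀ hA', mul_comm]
      exact hlow
    have hf2 : ∑ n ∈ c.support, ‖⟪e n, f⟫_ℂ‖ ^ 2 ≤ t :=
      Summable.sum_le_tsum c.support (fun n _ => sq_nonneg _) hs
    have : ‖(⟪x, f⟫_ℂ)‖ ≤ Real.sqrt (‖x‖ ^ 2 / A') * Real.sqrt t := by
      refine hb1.trans (hb2.trans ?_)
      exact mul_le_mul (Real.sqrt_le_sqrt hc2) (Real.sqrt_le_sqrt hf2)
        (Real.sqrt_nonneg _) (Real.sqrt_nonneg _)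
    refine this.trans (le_of_eq ?_)
    rw [hK, ← Real.sqrt_mul (by positivity),
      show ‖x‖ ^ 2 / A' * t = t / A' * ‖x‖ ^ 2 by ring,
      Real.sqrt_mul (by positivity), Real.sqrt_sq (norm_nonneg x)]
  have hcl : IsClosed {x : H | ‖(⟪x, f⟫_ℂ)‖ ≤ K * ‖x‖} := by
    apply isClosed_le
    · exact (Continuous.inner continuous_id continuous_const).norm
    · exact continuous_const.mul continuous_norm
  have hfin : f ∈ {x : H | ‖(⟪x, f⟫_ℂ)‖ ≤ K * ‖x‖} := by
    have h1 : f ∈ (Submodule.span ℂ (Set.range e)).topologicalClosure := by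
      rw [h.1]; exact Submodule.mem_top
    have h2 : f ∈ closure ((Submodule.span ℂ (Set.range e)) : Set H) := by
      rwa [← Submodule.topologicalClosure_coe]
    exact closure_minimal claim hcl h2
  have hff : ‖(⟪f, f⟫_ℂ)‖ = ‖f‖ ^ 2 := by
    rw [@inner_self_eq_norm_sq_to_K ℂ]; simp [norm_pow]
  rw [Set.mem_setOf_eq, hff] at hfin
  by_cases hf0 : f = 0
  · simp [hf0, ht0]
  · have hfp : 0 < ‖f‖ := norm_pos_iff.mpr hf0
    have h1 : ‖f‖ ≤ K := by nlinarith
    have h2 : ‖f‖ ^ 2 ≤ t / A' := by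
      have := Real.sq_sqrt (show (0:ℝ) ≤ t / A' by positivity)
      nlinarith [Real.sqrt_nonneg (t / A')]
    rw [mul_comm]
    rwa [← le_div_iff₀ hA']

set_option maxHeartbeats 2000000

/-- corollary for a frame `φ` with bounds `A, B` whose subfamily over `I`
is a Riesz basis with lower bound `A'`, `ψ` the canonical dual of `φ`: if
`(sup_{n∉I}|m n − λ|)·(B−A')/A < (inf_{n∈I}|m n − λ|)·A'/B`, then `λ` is in the resolvent
set of `M_{m,φ,ψ}`. -/
theorem resolvent_multiplier_canonical_dual_of_riesz_part
    {H : Type*} [NormedAddCommGroup H] [InnerProductSpace ℂ H] [CompleteSpace H]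
    (φ : ℕ → H) (A B : ℝ) (hA : 0 < A) (hB : 0 < B)
    (hframe : ∀ f : H, ∃ s : ℝ, HasSum (fun n => ‖⟪φ n, f⟫_ℂ‖ ^ 2) s ∧
      A * ‖f‖ ^ 2 ≤ s ∧ s ≤ B * ‖f‖ ^ 2)
    (I : Set ℕ) (A' : ℝ) (hA' : 0 < A')
    (hφ1 : ∃ B1 : ℝ, IsRieszBasisWith (fun n : I => φ n) A' B1)
    (S : H →L[ℂ] H) (hS : ∀ f : H, HasSum (fun n => ⟪φ n, f⟫_ℂ • φ n) (S f))
    (Sinv : H →L[ℂ] H) (hSinv : ∀ x : H, Sinv (S x) = x ∧ S (Sinv x) = x)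
    (ψ : ℕ → H) (hψ : ∀ n, ψ n = Sinv (φ n))
    (m : ℕ → ℂ) (hm : ∃ C : ℝ, ∀ n, ‖m n‖ ≤ C)
    (M : H →L[ℂ] H)
    (hM : ∀ f : H, HasSum (fun n => (m n * ⟪ψ n, f⟫_ℂ) • φ n) (M f))
    (lam : ℂ)
    (hcond : (⨆ n : {n : ℕ // n ∉ I}, ‖m n - lam‖) * ((B - A') / A) <
      (⨅ n : I, ‖m n - lam‖) * (A' / B)) :
    lam ∈ resolventSet ℂ M := by
  classical
  rw [spectrum.mem_resolventSet_iff]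
  rcases subsingleton_or_nontrivial H with hH | hH
  · haveI : Subsingleton (H →L[ℂ] H) :=
      ⟨fun f g => ContinuousLinearMap.ext fun x => Subsingleton.elim _ _⟩
    exact isUnit_of_subsingleton _
  obtain ⟨B1, hsp, hriesz⟩ := hφ1
  obtain ⟨C, hmC⟩ := hm
  -- basic frame facts
  have hsum : ∀ f : H, Summable (fun n => ‖⟪φ n, f⟫_ℂ‖ ^ 2) := fun f => by
    obtain ⟨s, hs, _, _⟩ := hframe f; exact hs.summable
  have hlb : ∀ f : H, A * ‖f‖ ^ 2 ≤ ∑' n, ‖⟪φ n, f⟫_ℂ‖ ^ 2 := fun f => by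
    obtain ⟨s, hs, h1, _⟩ := hframe f; rwa [hs.tsum_eq]
  have hub : ∀ f : H, ∑' n, ‖⟪φ n, f⟫_ℂ‖ ^ 2 ≤ B * ‖f‖ ^ 2 := fun f => by
    obtain ⟨s, hs, _, h2⟩ := hframe f; rwa [hs.tsum_eq]
  -- inner products against S
  have hSinner : ∀ f g : H, HasSum (fun n => ⟪φ n, g⟫_ℂ * ⟪f, φ n⟫_ℂ) ⟪f, S g⟫_ℂ := by
    intro f g
    have h := (hS g).mapL (innerSL ℂ f)
    simpa [inner_smul_right] using h
  have hSsym : ∀ f g : H, ⟪S f, g⟫_ℂ = ⟪f, S g⟫_ℂ := by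
    intro f g
    have h := (hSinner g f).star
    have h2 : (fun n => star (⟪φ n, f⟫_ℂ * ⟪g, φ n⟫_ℂ)) =
        fun n => ⟪φ n, g⟫_ℂ * ⟪f, φ n⟫_ℂ := by
      funext n
      simp only [star_mul', RCLike.star_def, inner_conj_symm]
      ring
    rw [h2] at h
    have h3 := h.unique (hSinner f g)
    rw [← h3, RCLike.star_def, inner_conj_symm]
  have hSinvsym : ∀ x y : H, ⟪Sinv x, y⟫_ℂ = ⟪x, Sinv y⟫_ℂ := by
    intro x y
    have h := hSsym (Sinv x) (Sinv y)
    rw [(hSinv x).2, (hSinv y).2] at h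
    exact h.symm
  -- ⟪f, S f⟫ is the real frame sum
  have hfSf : ∀ f : H, ⟪f, S f⟫_ℂ = ((∑' n, ‖⟪φ n, f⟫_ℂ‖ ^ 2 : ℝ) : ℂ) := by
    intro f
    have h1 : HasSum (fun n => ((‖⟪φ n, f⟫_ℂ‖ ^ 2 : ℝ) : ℂ))
        ((∑' n, ‖⟪φ n, f⟫_ℂ‖ ^ 2 : ℝ) : ℂ) := by
      have := ((hsum f).hasSum).mapL Complex.ofRealCLM
      simpa using this
    have h2 : (fun n => ⟪φ n, f⟫_ℂ * ⟪f, φ n⟫_ℂ) =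
        fun n => ((‖⟪φ n, f⟫_ℂ‖ ^ 2 : ℝ) : ℂ) := by
      funext n
      have h3 : ⟪f, φ n⟫_ℂ = (starRingEnd ℂ) ⟪φ n, f⟫_ℂ := (inner_conj_symm _ _).symm
      rw [h3, Complex.mul_conj]
      simp [Complex.normSq_eq_norm_sq]
    rw [← (hSinner f f).tsum_eq, h2]
    exact h1.tsum_eq
  have hSlow : ∀ f : H, A * ‖f‖ ≤ ‖S f‖ := by
    intro f
    by_cases hf : f = 0
    · simp [hf]
    have h1 : A * ‖f‖ ^ 2 ≤ (⟪f, S f⟫_ℂ).re := by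
      rw [hfSf f]
      simpa using hlb f
    have h2 : (⟪f, S f⟫_ℂ).re ≤ ‖f‖ * ‖S f‖ := by
      refine (Complex.re_le_norm _).trans ?_
      exact norm_inner_le_norm _ _
    have hfp : 0 < ‖f‖ := norm_pos_iff.mpr hf
    nlinarith
  have hSinv_ub : ∀ f : H, A * ‖Sinv f‖ ≤ ‖f‖ := fun f => by
    have := hSlow (Sinv f); rwa [(hSinv f).2] at this
  have hSup2 : ∀ f : H, ‖S f‖ ≤ B * ‖f‖ := by
    intro f
    by_cases hsf : S f = 0
    · rw [hsf]
      simp only [norm_zero]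
      positivity
    have h0 : ‖S f‖ ^ 2 = ‖(⟪S f, S f⟫_ℂ)‖ := by
      rw [@inner_self_eq_norm_sq_to_K ℂ]; simp [norm_pow]
    have hCS := tsum_CS (fun n => ‖⟪φ n, f⟫_ℂ‖) (fun n => ‖⟪φ n, S f⟫_ℂ‖)
      (fun n => norm_nonneg _) (fun n => norm_nonneg _) (hsum f) (hsum (S f))
    have hsummable : Summable fun n => ‖⟪φ n, f⟫_ℂ * ⟪S f, φ n⟫_ℂ‖ := by
      refine hCS.1.congr fun n => ?_
      simp only [norm_mul]
      rw [norm_inner_symm (S f)]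
    have h2 : ‖(⟪S f, S f⟫_ℂ)‖ ≤ ∑' n, ‖⟪φ n, f⟫_ℂ‖ * ‖⟪φ n, S f⟫_ℂ‖ := by
      rw [← (hSinner (S f) f).tsum_eq]
      refine (norm_tsum_le_tsum_norm hsummable).trans (le_of_eq ?_)
      exact tsum_congr fun n => by rw [norm_mul, norm_inner_symm (S f)]
    have h3 : Real.sqrt (∑' n, ‖⟪φ n, f⟫_ℂ‖ ^ 2) ≤ Real.sqrt B * ‖f‖ := by
      refine (Real.sqrt_le_sqrt (hub f)).trans (le_of_eq ?_)
      rw [Real.sqrt_mul hB.le, Real.sqrt_sq (norm_nonneg _)]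
    have h4 : Real.sqrt (∑' n, ‖⟪φ n, S f⟫_ℂ‖ ^ 2) ≤ Real.sqrt B * ‖S f‖ := by
      refine (Real.sqrt_le_sqrt (hub (S f))).trans (le_of_eq ?_)
      rw [Real.sqrt_mul hB.le, Real.sqrt_sq (norm_nonneg _)]
    have h5 : ‖S f‖ ^ 2 ≤ (Real.sqrt B * ‖f‖) * (Real.sqrt B * ‖S f‖) := by
      rw [h0]
      refine (h2.trans hCS.2).trans ?_
      exact mul_le_mul h3 h4 (Real.sqrt_nonneg _) (by positivity)
    have hsb : Real.sqrt B * Real.sqrt B = B := Real.mul_self_sqrt hB.le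
    rw [show (Real.sqrt B * ‖f‖) * (Real.sqrt B * ‖S f‖) =
      (Real.sqrt B * Real.sqrt B) * (‖f‖ * ‖S f‖) by ring, hsb] at h5
    have hsfp : 0 < ‖S f‖ := norm_pos_iff.mpr hsf
    nlinarith [h5, hsfp]
  have hSinv_lb : ∀ f : H, ‖f‖ ≤ B * ‖Sinv f‖ := fun f => by
    have := hSup2 (Sinv f); rwa [(hSinv f).2] at this
  -- subfamily facts
  have hIsum : ∀ f : H, Summable fun n : I => ‖⟪φ ↑n, f⟫_ℂ‖ ^ 2 := fun f =>
    (hsum f).comp_injective Subtype.val_injective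
  have hCsum : ∀ f : H, Summable fun n : ↥Iᶜ => ‖⟪φ ↑n, f⟫_ℂ‖ ^ 2 := fun f =>
    (hsum f).comp_injective Subtype.val_injective
  have hIlow : ∀ f : H, A' * ‖f‖ ^ 2 ≤ ∑' n : I, ‖⟪φ ↑n, f⟫_ℂ‖ ^ 2 := fun f =>
    riesz_lower (fun n : I => φ ↑n) A' B1 hA' ⟨hsp, hriesz⟩ f (hIsum f)
  have hsplitall : ∀ f : H, (∑' n : I, ‖⟪φ ↑n, f⟫_ℂ‖ ^ 2) +
      ∑' n : ↥Iᶜ, ‖⟪φ ↑n, f⟫_ℂ‖ ^ 2 = ∑' n, ‖⟪φ n, f⟫_ℂ‖ ^ 2 := fun f =>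
    Summable.tsum_add_tsum_compl (s := I) (f := fun n => ‖⟪φ n, f⟫_ℂ‖ ^ 2) (hIsum f) (hCsum f)
  have hCub : ∀ f : H, ∑' n : ↥Iᶜ, ‖⟪φ ↑n, f⟫_ℂ‖ ^ 2 ≤ (B - A') * ‖f‖ ^ 2 := fun f => by
    have h1 := hsplitall f
    have h2 := hIlow f
    have h3 := hub f
    linarith
  have hAB' : A' ≤ B := by
    obtain ⟨f0, hf0⟩ := exists_ne (0 : H)
    have h1 := hIlow f0
    have h2 := hCub f0
    have h3 : (0:ℝ) ≤ ∑' n : ↥Iᶜ, ‖⟪φ ↑n, f0⟫_ℂ‖ ^ 2 := tsum_nonneg fun n => sq_nonneg _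
    have h4 := hsplitall f0
    have h5 := hub f0
    have hfp : 0 < ‖f0‖ ^ 2 := by
      have := norm_pos_iff.mpr hf0; positivity
    nlinarith
  have hpsi_inner : ∀ (n : ℕ) (f : H), ⟪ψ n, f⟫_ℂ = ⟪φ n, Sinv f⟫_ℂ := fun n f => by
    rw [hψ n]; exact hSinvsym (φ n) f
  have hrecon : ∀ f : H, HasSum (fun n => ⟪ψ n, f⟫_ℂ • φ n) f := fun f => by
    have h := hS (Sinv f)
    rw [(hSinv f).2] at h
    simp only [hpsi_inner]
    exact h
  have hrecon' : ∀ f : H, HasSum (fun n => ⟪φ n, f⟫_ℂ • ψ n) f := fun f => by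
    have h := (hS f).mapL Sinv
    rw [(hSinv f).1] at h
    simp only [map_smul] at h
    simp only [hψ]
    exact h
  -- constants
  set sup : ℝ := ⨆ n : {n : ℕ // n ∉ I}, ‖m ↑n - lam‖ with hsupdef
  set inf : ℝ := ⨅ n : I, ‖m ↑n - lam‖ with hinfdef
  have hinf0 : 0 ≤ inf := Real.iInf_nonneg fun n => norm_nonneg _
  have hsup0 : 0 ≤ sup := Real.iSup_nonneg fun n => norm_nonneg _
  have hsupB : BddAbove (Set.range fun n : {n : ℕ // n ∉ I} => ‖m ↑n - lam‖) := by
    refine ⟨C + ‖lam‖, ?_⟩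
    rintro x ⟨n, rfl⟩
    exact (norm_sub_le _ _).trans (add_le_add_left (hmC ↑n) _)
  have hsup_le : ∀ n : ℕ, n ∉ I → ‖m n - lam‖ ≤ sup := fun n hn =>
    le_ciSup hsupB (⟨n, hn⟩ : {n : ℕ // n ∉ I})
  have hinf_le : ∀ n : ℕ, n ∈ I → inf ≤ ‖m n - lam‖ := fun n hn =>
    ciInf_le ⟨0, by rintro x ⟨k, rfl⟩; exact norm_nonneg _⟩ (⟨n, hn⟩ : I)
  set cst : ℝ := inf * (A' / B) - sup * ((B - A') / A) with hcst
  have hcpos : 0 < cst := sub_pos.mpr hcond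
  have hBA0 : 0 ≤ B - A' := by linarith
  -- coefficient bound helper
  have hcoefbd : ∀ (μ : ℕ → ℂ) (g : H), (∀ n, ‖μ n‖ ≤ C + ‖lam‖) →
      Summable (fun n => ‖μ n * ⟪φ n, g⟫_ℂ‖ ^ 2) := by
    intro μ g hμ
    refine Summable.of_nonneg_of_le (fun n => sq_nonneg _) (fun n => ?_)
      (((hsum g).mul_left ((C + ‖lam‖) ^ 2)))
    rw [norm_mul, mul_pow]
    exact mul_le_mul_of_nonneg_right (pow_le_pow_left₀ (norm_nonneg _) (hμ n) 2) (sq_nonneg _)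
  -- KEY 1 : lower bound for ‖lam • f - M f‖
  have KEY1 : ∀ f : H, cst * ‖f‖ ≤ ‖lam • f - M f‖ := by
    intro f
    set c : ℕ → ℂ := fun n => (lam - m n) * ⟪φ n, Sinv f⟫_ℂ with hcdef
    have h1 : HasSum (fun n => c n • φ n) (lam • f - M f) := by
      have ha := (hrecon f).const_smul lam
      have hb := (ha.sub (hM f))
      have heq : (fun n => lam • (⟪ψ n, f⟫_ℂ • φ n) - (m n * ⟪ψ n, f⟫_ℂ) • φ n) =
          fun n => c n • φ n := by
        funext n
        rw [smul_smul, ← sub_smul, hcdef, hpsi_inner]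
        ring_nf
      rwa [heq] at hb
    have hc2 : Summable fun n => ‖c n‖ ^ 2 := by
      refine hcoefbd (fun n => lam - m n) (Sinv f) fun n => ?_
      rw [add_comm]
      exact (norm_sub_le _ _).trans (add_le_add_right (hmC n) _)
    have hcI : Summable fun n : I => ‖c ↑n‖ ^ 2 := hc2.comp_injective Subtype.val_injective
    have hcC : Summable fun n : ↥Iᶜ => ‖c ↑n‖ ^ 2 := hc2.comp_injective Subtype.val_injective
    have hsI : Summable fun n : I => c ↑n • φ ↑n :=
      h1.summable.comp_injective Subtype.val_injective
    have hsC : Summable fun n : ↥Iᶜ => c ↑n • φ ↑n :=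
      h1.summable.comp_injective Subtype.val_injective
    set u : H := ∑' n : I, c ↑n • φ ↑n with hu
    set w : H := ∑' n : ↥Iᶜ, c ↑n • φ ↑n with hw
    have hsplit : u + w = lam • f - M f := by
      rw [hu, hw, Summable.tsum_add_tsum_compl (s := I) (f := fun n => c n • φ n) hsI hsC, h1.tsum_eq]
    -- lower bound for u
    obtain ⟨s, hss, hlow, _⟩ := hriesz (fun n : I => c ↑n) hcI
    have hsu : s = u := hss.unique hsI.hasSum
    have hterm : ∀ n : I, inf ^ 2 * ‖⟪φ ↑n, Sinv f⟫_ℂ‖ ^ 2 ≤ ‖c ↑n‖ ^ 2 := by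
      intro n
      have h := hinf_le ↑n n.2
      rw [norm_sub_rev] at h
      have hnc : ‖c ↑n‖ = ‖lam - m ↑n‖ * ‖⟪φ ↑n, Sinv f⟫_ℂ‖ := by
        rw [hcdef, norm_mul]
      rw [hnc, mul_pow]
      exact mul_le_mul_of_nonneg_right (pow_le_pow_left₀ hinf0 h 2) (sq_nonneg _)
    have h2 : inf ^ 2 * (A' * ‖Sinv f‖ ^ 2) ≤ ∑' n : I, ‖c ↑n‖ ^ 2 := by
      have ha : inf ^ 2 * (A' * ‖Sinv f‖ ^ 2) ≤
          inf ^ 2 * ∑' n : I, ‖⟪φ ↑n, Sinv f⟫_ℂ‖ ^ 2 :=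
        mul_le_mul_of_nonneg_left (hIlow (Sinv f)) (sq_nonneg _)
      refine ha.trans ?_
      rw [← tsum_mul_left]
      exact Summable.tsum_le_tsum hterm ((hIsum (Sinv f)).mul_left _) hcI
    have hulow : inf * (A' / B) * ‖f‖ ≤ ‖u‖ := by
      have e1 : A' * (inf ^ 2 * (A' * ‖Sinv f‖ ^ 2)) ≤ ‖u‖ ^ 2 := by
        refine le_trans (mul_le_mul_of_nonneg_left h2 hA'.le) ?_
        rw [← hsu]
        exact hlow
      have e2 : ‖f‖ ≤ B * ‖Sinv f‖ := hSinv_lb f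
      have e3 : (inf * (A' / B) * ‖f‖) ^ 2 ≤ ‖u‖ ^ 2 := by
        have e4 : inf * (A' / B) * ‖f‖ ≤ inf * (A' / B) * (B * ‖Sinv f‖) := by
          refine mul_le_mul_of_nonneg_left e2 ?_
          positivity
        have e5 : inf * (A' / B) * (B * ‖Sinv f‖) = inf * A' * ‖Sinv f‖ := by
          field_simp
        have e7 : 0 ≤ inf * (A' / B) * ‖f‖ := by positivity
        calc (inf * (A' / B) * ‖f‖) ^ 2 ≤ (inf * A' * ‖Sinv f‖) ^ 2 := by
              rw [← e5]; exact pow_le_pow_left₀ e7 e4 2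
          _ = A' * (inf ^ 2 * (A' * ‖Sinv f‖ ^ 2)) := by ring
          _ ≤ ‖u‖ ^ 2 := e1
      exact le_of_sq_le_sq' (norm_nonneg u) e3 (by positivity)
    -- upper bound for w
    have hwub : ‖w‖ ≤ sup * ((B - A') / A) * ‖f‖ := by
      obtain ⟨w', hw', hwb⟩ := synth_exists (fun n : ↥Iᶜ => φ ↑n) (B - A') hBA0
        (fun v => hCsum v) (fun v => hCub v) (fun n : ↥Iᶜ => c ↑n) hcC
      have hww : w' = w := hw'.unique hsC.hasSum
      have hterm2 : ∀ n : ↥Iᶜ, ‖c ↑n‖ ^ 2 ≤ sup ^ 2 * ‖⟪φ ↑n, Sinv f⟫_ℂ‖ ^ 2 := by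
        intro n
        have h := hsup_le ↑n n.2
        rw [norm_sub_rev] at h
        have hnc : ‖c ↑n‖ = ‖lam - m ↑n‖ * ‖⟪φ ↑n, Sinv f⟫_ℂ‖ := by rw [hcdef, norm_mul]
        rw [hnc, mul_pow]
        exact mul_le_mul_of_nonneg_right (pow_le_pow_left₀ (norm_nonneg _) h 2) (sq_nonneg _)
      have hsum2 : ∑' n : ↥Iᶜ, ‖c ↑n‖ ^ 2 ≤ sup ^ 2 * ((B - A') * ‖Sinv f‖ ^ 2) := by
        have ha := Summable.tsum_le_tsum hterm2 hcC ((hCsum (Sinv f)).mul_left (sup ^ 2))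
        refine ha.trans ?_
        rw [tsum_mul_left]
        exact mul_le_mul_of_nonneg_left (hCub (Sinv f)) (sq_nonneg _)
      rw [← hww]
      refine hwb.trans ?_
      have h9 : Real.sqrt (B - A') * Real.sqrt (B - A') = B - A' := Real.mul_self_sqrt hBA0
      calc Real.sqrt (B - A') * Real.sqrt (∑' n : ↥Iᶜ, ‖c ↑n‖ ^ 2)
          ≤ Real.sqrt (B - A') * Real.sqrt (sup ^ 2 * ((B - A') * ‖Sinv f‖ ^ 2)) :=
            mul_le_mul_of_nonneg_left (Real.sqrt_le_sqrt hsum2) (Real.sqrt_nonneg _)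
        _ = sup * (B - A') * ‖Sinv f‖ := by
            rw [Real.sqrt_mul (sq_nonneg sup), Real.sqrt_sq hsup0,
              Real.sqrt_mul hBA0, Real.sqrt_sq (norm_nonneg _)]
            linear_combination (sup * ‖Sinv f‖) * h9
        _ ≤ sup * ((B - A') / A) * ‖f‖ := by
            have h10 := hSinv_ub f
            have h11 : (0:ℝ) ≤ sup * ((B - A') / A) := by positivity
            calc sup * (B - A') * ‖Sinv f‖
                = sup * ((B - A') / A) * (A * ‖Sinv f‖) := by field_simp
              _ ≤ sup * ((B - A') / A) * ‖f‖ := mul_le_mul_of_nonneg_left h10 h11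
    have hfinal : ‖u‖ - ‖w‖ ≤ ‖u + w‖ := by
      have h := norm_add_le (u + w) (-w)
      simp only [add_neg_cancel_right, norm_neg] at h
      linarith
    calc cst * ‖f‖ = inf * (A' / B) * ‖f‖ - sup * ((B - A') / A) * ‖f‖ := by rw [hcst]; ring
      _ ≤ ‖u‖ - ‖w‖ := sub_le_sub hulow hwub
      _ ≤ ‖u + w‖ := hfinal
      _ = ‖lam • f - M f‖ := by rw [hsplit]
  -- KEY 2 : adjoint-side vector with the same lower bound
  have KEY2 : ∀ f : H, ∃ z : H,
      (∀ g : H, ⟪lam • g - M g, f⟫_ℂ = ⟪g, z⟫_ℂ) ∧ cst * ‖f‖ ≤ ‖z‖ := by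
    intro f
    set d : ℕ → ℂ := fun n => (starRingEnd ℂ) (lam - m n) * ⟪φ n, f⟫_ℂ with hddef
    have hd2 : Summable fun n => ‖d n‖ ^ 2 := by
      refine hcoefbd (fun n => (starRingEnd ℂ) (lam - m n)) f fun n => ?_
      rw [RCLike.norm_conj, add_comm]
      exact (norm_sub_le _ _).trans (add_le_add_right (hmC n) _)
    obtain ⟨v, hv, _⟩ := synth_exists φ B hB.le hsum hub d hd2
    have hz : HasSum (fun n => d n • ψ n) (Sinv v) := by
      have h := hv.mapL Sinv
      simp only [map_smul] at h
      simp only [hψ]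
      exact h
    refine ⟨Sinv v, ?_, ?_⟩
    · intro g
      have hA1 : HasSum (fun n => ⟪ψ n, g⟫_ℂ * ⟪f, φ n⟫_ℂ) ⟪f, g⟫_ℂ := by
        have := (hrecon g).mapL (innerSL ℂ f)
        simpa [inner_smul_right] using this
      have hA2 : HasSum (fun n => m n * ⟪ψ n, g⟫_ℂ * ⟪f, φ n⟫_ℂ) ⟪f, M g⟫_ℂ := by
        have := (hM g).mapL (innerSL ℂ f)
        simpa [inner_smul_right, mul_assoc] using this
      have hA3 : HasSum (fun n => (lam - m n) * (⟪ψ n, g⟫_ℂ * ⟪f, φ n⟫_ℂ))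
          ⟪f, lam • g - M g⟫_ℂ := by
        have h := (hA1.mul_left lam).sub hA2
        rw [inner_sub_right, inner_smul_right]
        have heq : (fun n => lam * (⟪ψ n, g⟫_ℂ * ⟪f, φ n⟫_ℂ) -
            m n * ⟪ψ n, g⟫_ℂ * ⟪f, φ n⟫_ℂ) =
            fun n => (lam - m n) * (⟪ψ n, g⟫_ℂ * ⟪f, φ n⟫_ℂ) := by
          funext n; ring
        rwa [heq] at h
      have hA4 := hA3.star
      have hB2 : HasSum (fun n => d n * ⟪g, ψ n⟫_ℂ) ⟪g, Sinv v⟫_ℂ := by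
        have := hz.mapL (innerSL ℂ g)
        simpa [inner_smul_right] using this
      have heq2 : (fun n => star ((lam - m n) * (⟪ψ n, g⟫_ℂ * ⟪f, φ n⟫_ℂ))) =
          fun n => d n * ⟪g, ψ n⟫_ℂ := by
        funext n
        simp only [star_mul', RCLike.star_def, inner_conj_symm, hddef, map_sub]
        ring
      rw [heq2] at hA4
      have h5 := hA4.unique hB2
      rw [← h5, RCLike.star_def, inner_conj_symm]
    · have hdI : Summable fun n : I => ‖d ↑n‖ ^ 2 := hd2.comp_injective Subtype.val_injective
      have hdC : Summable fun n : ↥Iᶜ => ‖d ↑n‖ ^ 2 := hd2.comp_injective Subtype.val_injective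
      have hvI : Summable fun n : I => d ↑n • φ ↑n :=
        hv.summable.comp_injective Subtype.val_injective
      have hvC : Summable fun n : ↥Iᶜ => d ↑n • φ ↑n :=
        hv.summable.comp_injective Subtype.val_injective
      set vI : H := ∑' n : I, d ↑n • φ ↑n with hvIdef
      set vC : H := ∑' n : ↥Iᶜ, d ↑n • φ ↑n with hvCdef
      have hsplitv : vI + vC = v := by
        rw [hvIdef, hvCdef, Summable.tsum_add_tsum_compl (s := I) (f := fun n => d n • φ n) hvI hvC,
          hv.tsum_eq]
      have hzsplit : Sinv v = Sinv vI + Sinv vC := by rw [← hsplitv, map_add]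
      obtain ⟨s, hss, hlow, _⟩ := hriesz (fun n : I => d ↑n) hdI
      have hsvI : s = vI := hss.unique hvI.hasSum
      have hterm : ∀ n : I, inf ^ 2 * ‖⟪φ ↑n, f⟫_ℂ‖ ^ 2 ≤ ‖d ↑n‖ ^ 2 := by
        intro n
        have h := hinf_le ↑n n.2
        rw [norm_sub_rev] at h
        have hnc : ‖d ↑n‖ = ‖lam - m ↑n‖ * ‖⟪φ ↑n, f⟫_ℂ‖ := by
          rw [hddef, norm_mul, RCLike.norm_conj]
        rw [hnc, mul_pow]
        exact mul_le_mul_of_nonneg_right (pow_le_pow_left₀ hinf0 h 2) (sq_nonneg _)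
      have h2 : inf ^ 2 * (A' * ‖f‖ ^ 2) ≤ ∑' n : I, ‖d ↑n‖ ^ 2 := by
        have ha : inf ^ 2 * (A' * ‖f‖ ^ 2) ≤ inf ^ 2 * ∑' n : I, ‖⟪φ ↑n, f⟫_ℂ‖ ^ 2 :=
          mul_le_mul_of_nonneg_left (hIlow f) (sq_nonneg _)
        refine ha.trans ?_
        rw [← tsum_mul_left]
        exact Summable.tsum_le_tsum hterm ((hIsum f).mul_left _) hdI
      have hulow : inf * (A' / B) * ‖f‖ ≤ ‖Sinv vI‖ := by
        have e1 : A' * (inf ^ 2 * (A' * ‖f‖ ^ 2)) ≤ ‖vI‖ ^ 2 := by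
          refine le_trans (mul_le_mul_of_nonneg_left h2 hA'.le) ?_
          rw [← hsvI]; exact hlow
        have e2 : ‖vI‖ ≤ B * ‖Sinv vI‖ := hSinv_lb vI
        have e3 : (inf * (A' / B) * ‖f‖) ^ 2 ≤ ‖Sinv vI‖ ^ 2 := by
          have e4 : (inf * A' * ‖f‖) ^ 2 ≤ ‖vI‖ ^ 2 := by
            calc (inf * A' * ‖f‖) ^ 2 = A' * (inf ^ 2 * (A' * ‖f‖ ^ 2)) := by ring
              _ ≤ ‖vI‖ ^ 2 := e1
          have e5 : ‖vI‖ ^ 2 ≤ B ^ 2 * ‖Sinv vI‖ ^ 2 := by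
            nlinarith [norm_nonneg vI, norm_nonneg (Sinv vI)]
          have e6 : (inf * (A' / B) * ‖f‖) ^ 2 * B ^ 2 = (inf * A' * ‖f‖) ^ 2 := by
            field_simp
          have hB2 : (0:ℝ) < B ^ 2 := by positivity
          nlinarith [e4, e5, e6]
        exact le_of_sq_le_sq' (norm_nonneg _) e3 (by positivity)
      have hwub : ‖Sinv vC‖ ≤ sup * ((B - A') / A) * ‖f‖ := by
        obtain ⟨w', hw', hwb⟩ := synth_exists (fun n : ↥Iᶜ => φ ↑n) (B - A') hBA0
          (fun v => hCsum v) (fun v => hCub v) (fun n : ↥Iᶜ => d ↑n) hdC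
        have hww : w' = vC := hw'.unique hvC.hasSum
        have hterm2 : ∀ n : ↥Iᶜ, ‖d ↑n‖ ^ 2 ≤ sup ^ 2 * ‖⟪φ ↑n, f⟫_ℂ‖ ^ 2 := by
          intro n
          have h := hsup_le ↑n n.2
          rw [norm_sub_rev] at h
          have hnc : ‖d ↑n‖ = ‖lam - m ↑n‖ * ‖⟪φ ↑n, f⟫_ℂ‖ := by
            rw [hddef, norm_mul, RCLike.norm_conj]
          rw [hnc, mul_pow]
          exact mul_le_mul_of_nonneg_right (pow_le_pow_left₀ (norm_nonneg _) h 2) (sq_nonneg _)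
        have hsum2 : ∑' n : ↥Iᶜ, ‖d ↑n‖ ^ 2 ≤ sup ^ 2 * ((B - A') * ‖f‖ ^ 2) := by
          have ha := Summable.tsum_le_tsum hterm2 hdC ((hCsum f).mul_left (sup ^ 2))
          refine ha.trans ?_
          rw [tsum_mul_left]
          exact mul_le_mul_of_nonneg_left (hCub f) (sq_nonneg _)
        have hvCb : ‖vC‖ ≤ sup * (B - A') * ‖f‖ := by
          rw [← hww]
          refine hwb.trans ?_
          have h9 : Real.sqrt (B - A') * Real.sqrt (B - A') = B - A' := Real.mul_self_sqrt hBA0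
          calc Real.sqrt (B - A') * Real.sqrt (∑' n : ↥Iᶜ, ‖d ↑n‖ ^ 2)
              ≤ Real.sqrt (B - A') * Real.sqrt (sup ^ 2 * ((B - A') * ‖f‖ ^ 2)) :=
                mul_le_mul_of_nonneg_left (Real.sqrt_le_sqrt hsum2) (Real.sqrt_nonneg _)
            _ = sup * (B - A') * ‖f‖ := by
                rw [Real.sqrt_mul (sq_nonneg sup), Real.sqrt_sq hsup0,
                  Real.sqrt_mul hBA0, Real.sqrt_sq (norm_nonneg _)]
                linear_combination (sup * ‖f‖) * h9
        have h10 := hSinv_ub vC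
        rw [show sup * ((B - A') / A) * ‖f‖ = (sup * (B - A') * ‖f‖) / A by field_simp,
          le_div_iff₀ hA]
        calc ‖Sinv vC‖ * A = A * ‖Sinv vC‖ := by ring
          _ ≤ ‖vC‖ := h10
          _ ≤ sup * (B - A') * ‖f‖ := hvCb
      have hfinal : ‖Sinv vI‖ - ‖Sinv vC‖ ≤ ‖Sinv vI + Sinv vC‖ := by
        have h := norm_add_le (Sinv vI + Sinv vC) (-(Sinv vC))
        simp only [add_neg_cancel_right, norm_neg] at h
        linarith
      rw [hzsplit]
      calc cst * ‖f‖ = inf * (A' / B) * ‖f‖ - sup * ((B - A') / A) * ‖f‖ := by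
            rw [hcst]; ring
        _ ≤ ‖Sinv vI‖ - ‖Sinv vC‖ := sub_le_sub hulow hwub
        _ ≤ ‖Sinv vI + Sinv vC‖ := hfinal
  -- final assembly
  set T : H →L[ℂ] H := algebraMap ℂ (H →L[ℂ] H) lam - M with hT
  have hTapp : ∀ f : H, T f = lam • f - M f := by
    intro f
    rw [hT]
    simp [Algebra.algebraMap_eq_smul_one]
  have hTlow : ∀ f : H, cst * ‖f‖ ≤ ‖T f‖ := fun f => by rw [hTapp]; exact KEY1 f
  have hanti : AntilipschitzWith (⟨cst, hcpos.le⟩ : NNReal)⁻¹ T := by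
    refine ContinuousLinearMap.antilipschitz_of_bound T fun x => ?_
    have h := hTlow x
    change ‖x‖ ≤ cst⁻¹ * ‖T x‖
    rw [← div_eq_inv_mul, le_div_iff₀ hcpos]
    linarith
  have hker : LinearMap.ker (T : H →ₗ[ℂ] H) = ⊥ := by
    rw [LinearMap.ker_eq_bot]
    exact hanti.injective
  have hclosed : IsClosed ((LinearMap.range (T : H →ₗ[ℂ] H) : Submodule ℂ H) : Set H) := by
    have h := hanti.isClosed_range T.uniformContinuous
    rwa [LinearMap.coe_range]
  have hrange : LinearMap.range (T : H →ₗ[ℂ] H) = ⊤ := by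
    haveI : CompleteSpace (LinearMap.range (T : H →ₗ[ℂ] H)) := hclosed.completeSpace_coe
    rw [← Submodule.orthogonal_eq_bot_iff, Submodule.eq_bot_iff]
    intro f hf
    rw [Submodule.mem_orthogonal] at hf
    obtain ⟨z, hz1, hz2⟩ := KEY2 f
    have hz0 : z = 0 := by
      have hzz : ⟪z, z⟫_ℂ = 0 := by
        rw [← hz1 z, ← hTapp]
        exact hf (T z) ⟨z, rfl⟩
      exact inner_self_eq_zero.mp hzz
    rw [hz0, norm_zero] at hz2
    have hf0 : ‖f‖ ≤ 0 := by nlinarith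
    exact norm_le_zero_iff.mp hf0
  let e := ContinuousLinearEquiv.ofBijective T hker hrange
  have he : ∀ y, e y = T y := fun y => rfl
  refine ⟨⟨T, (e.symm : H →L[ℂ] H), ?_, ?_⟩, rfl⟩
  · ext x
    rw [ContinuousLinearMap.mul_apply, ContinuousLinearMap.one_apply]
    calc T ((e.symm : H →L[ℂ] H) x) = e (e.symm x) := (he _).symm
      _ = x := e.apply_symm_apply x
  · ext x
    rw [ContinuousLinearMap.mul_apply, ContinuousLinearMap.one_apply]
    show e.symm (T x) = x
    rw [← he]
    exact e.symm_apply_apply x
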